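/- arXiv:1806.06317 — 2 statements merged into one kernel-verified Lean document; each statement's English description precedes it below -/
import Mathlib

section
/- Let f : ℝ^m → ℝ be convex and differentiable with a global minimizer w* and f* = f(w*). Fix η > 0, σ ≥ 0, n ≥ 1 and K ≥ 1. On a probability space, let w^0, g^0, w^1, g^1, … be random vectors in ℝ^m such that w^{k+1} = w^k − η (A_σ^{(n)})^{-1} g^k for all k, and such that the conditional expectation of g^k given (w^0, g^0, …, g^{k−1}) equals ∇f(w^k); assume all relevant quantities are integrable. Let \bar{w}^K = (1/K) Σ_{k=0}^{K−1} w^k. Then E[f(\bar{w}^K)] − f* ≤ (1/(2ηK)) E[‖w^0 − w*‖²_{A_σ^{(n)}}] + (η/(2K)) Σ_{k=0}^{K−1} E[‖g^k‖²_{(A_σ^{(n)})^{-1}}]. -/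
open Matrix

/-- The `m × m` periodic forward finite difference matrix `D₊`. -/
noncomputable def Dplus (m : ℕ) [NeZero m] : Matrix (Fin m) (Fin m) ℝ :=
  Matrix.of fun i j => if j = i then -1 else if j = i + 1 then 1 else 0

/-- The periodic backward finite difference matrix `D₋ = -D₊ᵀ`. -/
noncomputable def Dminus (m : ℕ) [NeZero m] : Matrix (Fin m) (Fin m) ℝ := -(Dplus m)ᵀ

/-- The periodic one-dimensional discrete Laplacian `L = D₋ D₊`. -/
noncomputable def Lap (m : ℕ) [NeZero m] : Matrix (Fin m) (Fin m) ℝ := Dminus m * Dplus m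

/-- The Laplacian smoothing matrix `A_σ = I - σ L`. -/
noncomputable def MatA (m : ℕ) [NeZero m] (σ : ℝ) : Matrix (Fin m) (Fin m) ℝ :=
  1 - σ • Lap m

/-- The `n`-th order smoothing matrix `A_σ⁽ⁿ⁾ = I + (-1)ⁿ σ Lⁿ`. -/
noncomputable def MatAn (m : ℕ) [NeZero m] (σ : ℝ) (n : ℕ) : Matrix (Fin m) (Fin m) ℝ :=
  1 + ((-1 : ℝ) ^ n * σ) • Lap m ^ n
open MeasureTheory

section AuxLemmas

set_option linter.unusedSectionVars false

variable {m : ℕ} [NeZero m]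

lemma LSSGD.psd_smul {M : Matrix (Fin m) (Fin m) ℝ} (hM : M.PosSemidef) {σ : ℝ} (hσ : 0 ≤ σ) :
    (σ • M).PosSemidef := by
  rw [Matrix.posSemidef_iff_dotProduct_mulVec]
  constructor
  · unfold Matrix.IsHermitian
    rw [Matrix.conjTranspose_smul, hM.1.eq]
    simp
  · intro x
    rw [Matrix.smul_mulVec, dotProduct_smul]
    exact mul_nonneg hσ (hM.dotProduct_mulVec_nonneg x)

lemma LSSGD.matAn_posDef (σ : ℝ) (hσ : 0 ≤ σ) (n : ℕ) : (MatAn m σ n).PosDef := by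
  have hneg : ((-1 : ℝ)) • (Lap m) = (Dplus m)ᵀ * Dplus m := by
    simp [Lap, Dminus, Matrix.neg_mul]
  have h1 : ((-1 : ℝ) ^ n * σ) • Lap m ^ n = σ • (((-1 : ℝ) • Lap m) ^ n) := by
    rw [smul_pow, smul_smul, mul_comm]
  have hpsd : (((-1 : ℝ) • Lap m) ^ n).PosSemidef := by
    rw [hneg]
    have : ((Dplus m)ᵀ * Dplus m).PosSemidef := by
      have := Matrix.posSemidef_conjTranspose_mul_self (Dplus m)
      simpa using this
    exact this.pow n
  rw [MatAn, h1]
  exact Matrix.PosDef.add_posSemidef Matrix.PosDef.one (LSSGD.psd_smul hpsd hσ)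

lemma LSSGD.matAn_mul_inv (σ : ℝ) (hσ : 0 ≤ σ) (n : ℕ) :
    MatAn m σ n * (MatAn m σ n)⁻¹ = 1 :=
  Matrix.mul_nonsing_inv _ (isUnit_iff_ne_zero.mpr (LSSGD.matAn_posDef σ hσ n).det_pos.ne')

lemma LSSGD.matAn_inv_mul (σ : ℝ) (hσ : 0 ≤ σ) (n : ℕ) :
    (MatAn m σ n)⁻¹ * MatAn m σ n = 1 :=
  Matrix.nonsing_inv_mul _ (isUnit_iff_ne_zero.mpr (LSSGD.matAn_posDef σ hσ n).det_pos.ne')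

lemma LSSGD.psd_inner_nonneg {M : Matrix (Fin m) (Fin m) ℝ} (hM : M.PosSemidef)
    (x : EuclideanSpace ℝ (Fin m)) : 0 ≤ (inner ℝ x (Matrix.toEuclideanLin M x) : ℝ) := by
  have h : (inner ℝ x (Matrix.toEuclideanLin M x) : ℝ)
      = (WithLp.equiv 2 (Fin m → ℝ) x) ⬝ᵥ (M *ᵥ (WithLp.equiv 2 (Fin m → ℝ) x)) := by
    simp [PiLp.inner_apply, dotProduct, Matrix.toEuclideanLin_apply, RCLike.inner_apply, mul_comm]
  rw [h]
  simpa using hM.dotProduct_mulVec_nonneg (WithLp.equiv 2 (Fin m → ℝ) x)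

lemma LSSGD.pd_inner_pos {M : Matrix (Fin m) (Fin m) ℝ} (hM : M.PosDef)
    {x : EuclideanSpace ℝ (Fin m)} (hx : x ≠ 0) :
    0 < (inner ℝ x (Matrix.toEuclideanLin M x) : ℝ) := by
  have h : (inner ℝ x (Matrix.toEuclideanLin M x) : ℝ)
      = (WithLp.equiv 2 (Fin m → ℝ) x) ⬝ᵥ (M *ᵥ (WithLp.equiv 2 (Fin m → ℝ) x)) := by
    simp [PiLp.inner_apply, dotProduct, Matrix.toEuclideanLin_apply, RCLike.inner_apply, mul_comm]
  rw [h]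
  have hx' : (WithLp.equiv 2 (Fin m → ℝ)) x ≠ 0 := by
    intro h0; apply hx; ext i; exact congrFun h0 i
  simpa using hM.dotProduct_mulVec_pos hx'

lemma LSSGD.pd_coercive {M : Matrix (Fin m) (Fin m) ℝ} (hM : M.PosDef) :
    ∃ c > 0, ∀ x : EuclideanSpace ℝ (Fin m),
      c * ‖x‖ ^ 2 ≤ (inner ℝ x (Matrix.toEuclideanLin M x) : ℝ) := by
  set q : EuclideanSpace ℝ (Fin m) → ℝ :=
    fun x => (inner ℝ x (Matrix.toEuclideanLin M x) : ℝ) with hq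
  have hT : Continuous (Matrix.toEuclideanLin M : EuclideanSpace ℝ (Fin m) → _) :=
    LinearMap.continuous_of_finiteDimensional _
  have hqc : Continuous q := Continuous.inner continuous_id hT
  have hsc : IsCompact (Metric.sphere (0 : EuclideanSpace ℝ (Fin m)) 1) := isCompact_sphere _ _
  have hsn : (Metric.sphere (0 : EuclideanSpace ℝ (Fin m)) 1).Nonempty :=
    NormedSpace.sphere_nonempty.2 zero_le_one
  obtain ⟨x₀, hx₀mem, hx₀min⟩ := hsc.exists_isMinOn hsn hqc.continuousOn
  have hx₀norm : ‖x₀‖ = 1 := by simpa using hx₀mem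
  have hx₀ne : x₀ ≠ 0 := by intro h; rw [h] at hx₀norm; simp at hx₀norm
  refine ⟨q x₀, LSSGD.pd_inner_pos hM hx₀ne, fun x => ?_⟩
  rcases eq_or_ne x 0 with rfl | hx
  · simp [hq]
  · set u : EuclideanSpace ℝ (Fin m) := ‖x‖⁻¹ • x with hu
    have hxn : ‖x‖ ≠ 0 := norm_ne_zero_iff.2 hx
    have humem : u ∈ Metric.sphere (0 : EuclideanSpace ℝ (Fin m)) 1 := by
      simp [hu, norm_smul, abs_of_nonneg (inv_nonneg.2 (norm_nonneg x)), inv_mul_cancel₀ hxn]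
    have hqx : q x = ‖x‖ ^ 2 * q u := by
      have : x = ‖x‖ • u := by rw [hu, smul_smul, mul_inv_cancel₀ hxn, one_smul]
      rw [hq]
      conv_lhs => rw [this]
      simp only [LinearMap.map_smul, inner_smul_left, inner_smul_right, RCLike.star_def,
        conj_trivial, real_inner_smul_left, real_inner_smul_right]
      ring
    show q x₀ * ‖x‖ ^ 2 ≤ q x
    rw [hqx]
    have := hx₀min humem
    have h2 : (0:ℝ) ≤ ‖x‖ ^ 2 := sq_nonneg _
    calc q x₀ * ‖x‖ ^ 2 ≤ q u * ‖x‖ ^ 2 := by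
          exact mul_le_mul_of_nonneg_right this h2
      _ = ‖x‖ ^ 2 * q u := by ring

lemma LSSGD.toEuc_mul (M N : Matrix (Fin m) (Fin m) ℝ) (x : EuclideanSpace ℝ (Fin m)) :
    Matrix.toEuclideanLin (M * N) x = Matrix.toEuclideanLin M (Matrix.toEuclideanLin N x) := by
  simp [Matrix.toEuclideanLin_apply, Matrix.mulVec_mulVec]

lemma LSSGD.toEuc_one (x : EuclideanSpace ℝ (Fin m)) :
    Matrix.toEuclideanLin (1 : Matrix (Fin m) (Fin m) ℝ) x = x := by
  simp [Matrix.toEuclideanLin_apply]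

lemma LSSGD.herm_symm {M : Matrix (Fin m) (Fin m) ℝ} (hM : M.IsHermitian)
    (x y : EuclideanSpace ℝ (Fin m)) :
    (inner ℝ (Matrix.toEuclideanLin M x) y : ℝ) = inner ℝ x (Matrix.toEuclideanLin M y) :=
  (Matrix.isHermitian_iff_isSymmetric.1 hM) x y

lemma LSSGD.descent_identity {A : Matrix (Fin m) (Fin m) ℝ} (hA : A.PosDef)
    (hinv : A⁻¹ * A = 1) (hinv' : A * A⁻¹ = 1) (η : ℝ)
    (v gv : EuclideanSpace ℝ (Fin m)) :
    (inner ℝ (v - η • Matrix.toEuclideanLin A⁻¹ gv)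
        (Matrix.toEuclideanLin A (v - η • Matrix.toEuclideanLin A⁻¹ gv)) : ℝ)
      = (inner ℝ v (Matrix.toEuclideanLin A v) : ℝ) - 2 * η * (inner ℝ gv v : ℝ)
        + η ^ 2 * (inner ℝ gv (Matrix.toEuclideanLin A⁻¹ gv) : ℝ) := by
  set TA := Matrix.toEuclideanLin A
  set TB := Matrix.toEuclideanLin A⁻¹
  have hBA : ∀ x, TB (TA x) = x := fun x => by
    rw [← LSSGD.toEuc_mul, hinv, LSSGD.toEuc_one]
  have hAB : ∀ x, TA (TB x) = x := fun x => by
    rw [← LSSGD.toEuc_mul, hinv', LSSGD.toEuc_one]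
  have hBsymm := LSSGD.herm_symm (hA.inv.1)
  have e1 : (inner ℝ (TB gv) (TA v) : ℝ) = inner ℝ gv v := by
    rw [hBsymm gv (TA v)]
    rw [show (Matrix.toEuclideanLin A⁻¹) (TA v) = v from hBA v]
  rw [map_sub, LinearMap.map_smul]
  simp only [inner_sub_left, inner_sub_right, real_inner_smul_left, real_inner_smul_right]
  rw [show TA (TB gv) = gv from hAB gv, e1]
  have e3 : (inner ℝ v gv : ℝ) = inner ℝ gv v := real_inner_comm _ _
  have e4 : (inner ℝ (TB gv) gv : ℝ) = inner ℝ gv (TB gv) := real_inner_comm _ _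
  rw [e3, e4]
  ring

lemma LSSGD.coord_abs_le_norm (x : EuclideanSpace ℝ (Fin m)) (i : Fin m) : |x i| ≤ ‖x‖ := by
  have hnorm := EuclideanSpace.norm_eq x
  have h1 : |x i| = Real.sqrt ((x i)^2) := by rw [Real.sqrt_sq_eq_abs]
  rw [h1, hnorm]
  apply Real.sqrt_le_sqrt
  calc x i ^ 2 = ‖x i‖ ^ 2 := by rw [Real.norm_eq_abs, sq_abs]
    _ ≤ _ := Finset.single_le_sum (f := fun j => ‖x j‖^2)
        (fun j _ => sq_nonneg _) (Finset.mem_univ i)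

lemma LSSGD.convex_grad_ineq {E : Type*} [NormedAddCommGroup E] [InnerProductSpace ℝ E]
    [CompleteSpace E]
    {f : E → ℝ} (hconv : ConvexOn ℝ Set.univ f)
    {x : E} {gx : E} (hx : HasGradientAt f gx x) (y : E) :
    f x + inner ℝ gx (y - x) ≤ f y := by
  set φ : ℝ → ℝ := fun t => f (x + t • (y - x)) with hφ
  have hφconv : ConvexOn ℝ Set.univ φ := by
    have := hconv.comp_affineMap (AffineMap.lineMap x y : ℝ →ᵃ[ℝ] E)
    have heq : (f ∘ (AffineMap.lineMap x y : ℝ →ᵃ[ℝ] E)) = φ := by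
      funext t
      simp only [hφ, Function.comp_apply, AffineMap.lineMap_apply_module]
      congr 1
      module
    rw [heq] at this
    simpa using this
  have hd : HasDerivAt φ (inner ℝ gx (y - x) : ℝ) 0 := by
    have hline : HasDerivAt (fun t : ℝ => x + t • (y - x)) (y - x) 0 := by
      simpa using ((hasDerivAt_id (0:ℝ)).smul_const (y - x)).const_add x
    have hf' : HasFDerivAt f ((InnerProductSpace.toDual ℝ E) gx : E →L[ℝ] ℝ) x :=
      hx
    have hf'' : HasFDerivAt f ((InnerProductSpace.toDual ℝ E) gx : E →L[ℝ] ℝ)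
        (x + (0:ℝ) • (y - x)) := by simpa using hf'
    have := hf''.comp_hasDerivAt (0:ℝ) hline
    simp [InnerProductSpace.toDual_apply_apply] at this
    exact this
  have h01 : (0:ℝ) < 1 := one_pos
  have := hφconv.le_slope_of_hasDerivAt (Set.mem_univ 0) (Set.mem_univ 1) h01 hd
  rw [slope_def_field] at this
  simp only [hφ] at this
  simp only [zero_smul, add_zero, one_smul] at this
  have h1 : x + (y - x) = y := by abel
  rw [h1] at this
  linarith [this]

lemma LSSGD.condexp_comp_clm {α E F : Type*}
  [NormedAddCommGroup E] [NormedSpace ℝ E] [CompleteSpace E]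
  [NormedAddCommGroup F] [NormedSpace ℝ F] [CompleteSpace F]
  {m m0 : MeasurableSpace α} {μ : Measure α}
  (hm : m ≤ m0) [SigmaFinite (μ.trim hm)] (T : E →L[ℝ] F)
    {g : α → E} (hg : Integrable g μ) :
    (μ[fun ω => T (g ω)|m]) =ᵐ[μ] fun ω => T ((μ[g|m]) ω) := by
  symm
  refine ae_eq_condExp_of_forall_setIntegral_eq hm (T.integrable_comp hg)
    (fun s _ _ => (T.integrable_comp integrable_condExp).integrableOn)
    (fun s hs hμs => ?_) ?_
  · rw [ContinuousLinearMap.integral_comp_comm T integrable_condExp.integrableOn,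
      ContinuousLinearMap.integral_comp_comm T hg.integrableOn,
      setIntegral_condExp hm hg hs]
  · exact (T.continuous.comp_stronglyMeasurable stronglyMeasurable_condExp).aestronglyMeasurable

lemma LSSGD.key_cond {Ω : Type} {mΩ : MeasurableSpace Ω} (μ : Measure Ω) [IsProbabilityMeasure μ]
    {𝔉 : MeasurableSpace Ω} (hle : 𝔉 ≤ mΩ)
    {G V F : Ω → EuclideanSpace ℝ (Fin m)}
    (hGint : Integrable G μ) (hVmeas : Measurable[𝔉] V)
    (hprod : ∀ i, Integrable (fun ω => V ω i * G ω i) μ)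
    (hcond : μ[G|𝔉] =ᵐ[μ] F) :
    (∫ ω, (inner ℝ (G ω) (V ω) : ℝ) ∂μ = ∫ ω, (inner ℝ (F ω) (V ω) : ℝ) ∂μ)
      ∧ Integrable (fun ω => (inner ℝ (F ω) (V ω) : ℝ)) μ := by
  have key_i : ∀ i, (∫ ω, V ω i * G ω i ∂μ = ∫ ω, V ω i * F ω i ∂μ)
      ∧ Integrable (fun ω => V ω i * F ω i) μ := by
    intro i
    have hVi : StronglyMeasurable[𝔉] (fun ω => V ω i) :=
      ((EuclideanSpace.proj (𝕜 := ℝ) i).continuous.measurable.comp hVmeas).stronglyMeasurable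
    have hGi : Integrable (fun ω => G ω i) μ :=
      (EuclideanSpace.proj (𝕜 := ℝ) i).integrable_comp hGint
    have step1 : μ[(fun ω => V ω i) * (fun ω => G ω i)|𝔉]
        =ᵐ[μ] (fun ω => V ω i) * μ[(fun ω => G ω i)|𝔉] :=
      condExp_mul_of_stronglyMeasurable_left hVi (hprod i) hGi
    have step2 : μ[(fun ω => G ω i)|𝔉] =ᵐ[μ] fun ω => F ω i := by
      have h1 := LSSGD.condexp_comp_clm hle (EuclideanSpace.proj (𝕜 := ℝ) i) hGint
      refine h1.trans (hcond.mono fun ω h => ?_)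
      simp only [h]; rfl
    have hmul : μ[(fun ω => V ω i) * (fun ω => G ω i)|𝔉]
        =ᵐ[μ] fun ω => V ω i * F ω i :=
      step1.trans ((step2.mono fun ω h => by simp only [Pi.mul_apply, h]))
    have hint : Integrable (fun ω => V ω i * F ω i) μ :=
      (integrable_condExp (f := (fun ω => V ω i) * (fun ω => G ω i))).congr hmul
    constructor
    · have h0 : ∫ ω, V ω i * G ω i ∂μ
          = ∫ ω, ((fun ω => V ω i) * fun ω => G ω i) ω ∂μ := rfl
      rw [h0, ← integral_condExp hle (μ := μ) (f := (fun ω => V ω i) * (fun ω => G ω i))]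
      exact integral_congr_ae hmul
    · exact hint
  have hinnG : ∀ ω, (inner ℝ (G ω) (V ω) : ℝ) = ∑ i, V ω i * G ω i := by
    intro ω
    simp [PiLp.inner_apply, RCLike.inner_apply, mul_comm]
  have hinnF : ∀ ω, (inner ℝ (F ω) (V ω) : ℝ) = ∑ i, V ω i * F ω i := by
    intro ω
    simp [PiLp.inner_apply, RCLike.inner_apply, mul_comm]
  constructor
  · calc ∫ ω, (inner ℝ (G ω) (V ω) : ℝ) ∂μ = ∫ ω, ∑ i, V ω i * G ω i ∂μ := by
          exact integral_congr_ae (Filter.Eventually.of_forall hinnG)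
      _ = ∑ i, ∫ ω, V ω i * G ω i ∂μ := integral_finset_sum _ (fun i _ => hprod i)
      _ = ∑ i, ∫ ω, V ω i * F ω i ∂μ := by
          exact Finset.sum_congr rfl fun i _ => (key_i i).1
      _ = ∫ ω, ∑ i, V ω i * F ω i ∂μ := (integral_finset_sum _ (fun i _ => (key_i i).2)).symm
      _ = ∫ ω, (inner ℝ (F ω) (V ω) : ℝ) ∂μ :=
          integral_congr_ae (Filter.Eventually.of_forall fun ω => (hinnF ω).symm)
  · exact (integrable_finset_sum _ (fun i _ => (key_i i).2)).congr
      (Filter.Eventually.of_forall fun ω => (hinnF ω).symm)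

end AuxLemmas

/-- Optimality gap of LSSGD for convex `f`: if `w^{k+1} = w^k - η (A_σ⁽ⁿ⁾)⁻¹ g^k` with
`E[g^k | w^0, g^0, …, g^{k-1}] = ∇f(w^k)`, then for `w̄^K = (1/K) Σ_{k<K} w^k`,
`E[f(w̄^K)] - f(w*) ≤ (1/(2ηK)) E‖w^0 - w*‖²_{A_σ⁽ⁿ⁾}
  + (η/(2K)) Σ_{k<K} E‖g^k‖²_{(A_σ⁽ⁿ⁾)⁻¹}`. -/
theorem stmt6 {Ω : Type} [MeasurableSpace Ω] (μ : Measure Ω) [IsProbabilityMeasure μ]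
    (m : ℕ) [NeZero m] (σ : ℝ) (hσ : 0 ≤ σ) (n : ℕ) (hn : 1 ≤ n)
    (η : ℝ) (hη : 0 < η) (K : ℕ) (hK : 1 ≤ K)
    (f : EuclideanSpace ℝ (Fin m) → ℝ)
    (hconv : ConvexOn ℝ Set.univ f)
    (gradf : EuclideanSpace ℝ (Fin m) → EuclideanSpace ℝ (Fin m))
    (hgrad : ∀ x, HasGradientAt f (gradf x) x)
    (wstar : EuclideanSpace ℝ (Fin m)) (hminzr : ∀ x, f wstar ≤ f x)
    (w g : ℕ → Ω → EuclideanSpace ℝ (Fin m))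
    (hrec : ∀ k ω, w (k + 1) ω
        = w k ω - η • Matrix.toEuclideanLin ((MatAn m σ n)⁻¹) (g k ω))
    (hmeasw : ∀ k, Measurable (w k)) (hmeasg : ∀ k, Measurable (g k))
    -- the conditional expectation of `g^k` given `(w^0, g^0, …, g^{k-1})` is `∇f(w^k)`
    (hcond : ∀ k, μ[g k | MeasurableSpace.comap (w 0) inferInstance ⊔
          ⨆ j ∈ Finset.range k, MeasurableSpace.comap (g j) inferInstance]
        =ᵐ[μ] fun ω => gradf (w k ω))
    -- integrability of all relevant quantities
    (hint1 : ∀ k, Integrable (fun ω => f (w k ω)) μ)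
    (hint2 : Integrable (fun ω => f ((K : ℝ)⁻¹ • ∑ k ∈ Finset.range K, w k ω)) μ)
    (hint3 : ∀ k, Integrable (g k) μ)
    (hint4 : ∀ k, Integrable
        (fun ω => (inner ℝ (g k ω) (Matrix.toEuclideanLin ((MatAn m σ n)⁻¹) (g k ω)) : ℝ)) μ)
    (hint5 : ∀ k, Integrable
        (fun ω => (inner ℝ (w k ω - wstar)
          (Matrix.toEuclideanLin (MatAn m σ n) (w k ω - wstar)) : ℝ)) μ)
    (hint6 : ∀ k, Integrable (fun ω => (inner ℝ (g k ω) (w k ω - wstar) : ℝ)) μ) :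
    (∫ ω, f ((K : ℝ)⁻¹ • ∑ k ∈ Finset.range K, w k ω) ∂μ) - f wstar ≤
      (1 / (2 * η * K)) * ∫ ω, (inner ℝ (w 0 ω - wstar)
          (Matrix.toEuclideanLin (MatAn m σ n) (w 0 ω - wstar)) : ℝ) ∂μ
      + (η / (2 * K)) * ∑ k ∈ Finset.range K,
          ∫ ω, (inner ℝ (g k ω) (Matrix.toEuclideanLin ((MatAn m σ n)⁻¹) (g k ω)) : ℝ) ∂μ := by
  classical
  have hApd : (MatAn m σ n).PosDef := LSSGD.matAn_posDef σ hσ n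
  have hBpd : ((MatAn m σ n)⁻¹).PosDef := hApd.inv
  have hinv' : MatAn m σ n * (MatAn m σ n)⁻¹ = 1 := LSSGD.matAn_mul_inv σ hσ n
  have hinv : (MatAn m σ n)⁻¹ * MatAn m σ n = 1 := LSSGD.matAn_inv_mul σ hσ n
  set a : ℕ → ℝ := fun k => ∫ ω, (inner ℝ (w k ω - wstar)
      (Matrix.toEuclideanLin (MatAn m σ n) (w k ω - wstar)) : ℝ) ∂μ with ha
  set b : ℕ → ℝ := fun k => ∫ ω, (inner ℝ (g k ω)
      (Matrix.toEuclideanLin ((MatAn m σ n)⁻¹) (g k ω)) : ℝ) ∂μ with hb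
  set c : ℕ → ℝ := fun k => ∫ ω, (inner ℝ (g k ω) (w k ω - wstar) : ℝ) ∂μ with hc
  -- the filtration
  set 𝔉 : ℕ → MeasurableSpace Ω := fun k =>
    MeasurableSpace.comap (w 0) inferInstance ⊔
      ⨆ j ∈ Finset.range k, MeasurableSpace.comap (g j) inferInstance with h𝔉
  have hle : ∀ k, 𝔉 k ≤ ‹MeasurableSpace Ω› := by
    intro k
    apply sup_le (measurable_iff_comap_le.1 (hmeasw 0))
    exact iSup₂_le fun j _ => measurable_iff_comap_le.1 (hmeasg j)
  have hwm : ∀ k, Measurable[𝔉 k] (w k) := by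
    intro k; induction k with
    | zero =>
      exact (measurable_iff_comap_le.2 le_rfl).mono le_sup_left le_rfl
    | succ k ih =>
      have hmono : 𝔉 k ≤ 𝔉 (k+1) := by
        apply sup_le_sup_left
        exact biSup_mono fun j hj =>
          Finset.mem_range.2 (lt_trans (Finset.mem_range.1 hj) (Nat.lt_succ_self k))
      have hwk : Measurable[𝔉 (k+1)] (w k) := ih.mono hmono le_rfl
      have hgk : Measurable[𝔉 (k+1)] (g k) := by
        have h1 : MeasurableSpace.comap (g k) inferInstance ≤ 𝔉 (k+1) := by
          refine le_trans ?_ le_sup_right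
          exact le_biSup (fun j => MeasurableSpace.comap (g j) inferInstance)
            (Finset.self_mem_range_succ k)
        exact (measurable_iff_comap_le.2 le_rfl).mono h1 le_rfl
      have hTB : Continuous
          (Matrix.toEuclideanLin ((MatAn m σ n)⁻¹) : EuclideanSpace ℝ (Fin m) → _) :=
        LinearMap.continuous_of_finiteDimensional _
      have heq : w (k+1) = fun ω =>
          w k ω - η • Matrix.toEuclideanLin ((MatAn m σ n)⁻¹) (g k ω) := funext (hrec k)
      rw [heq]
      exact hwk.sub (((continuous_const_smul η).comp hTB).measurable.comp hgk)
  -- square integrability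
  obtain ⟨cA, hcA, hcoA⟩ := LSSGD.pd_coercive hApd
  obtain ⟨cB, hcB, hcoB⟩ := LSSGD.pd_coercive hBpd
  have hsqg : ∀ k, Integrable (fun ω => ‖g k ω‖^2) μ := by
    intro k
    refine ((hint4 k).const_mul cB⁻¹).mono'
      (((hmeasg k).norm.pow_const 2).aestronglyMeasurable) ?_
    filter_upwards with ω
    rw [Real.norm_eq_abs, abs_of_nonneg (by positivity)]
    have h1 := hcoB (g k ω)
    have h2 := mul_le_mul_of_nonneg_left h1 (inv_nonneg.2 hcB.le)
    rw [← mul_assoc, inv_mul_cancel₀ hcB.ne', one_mul] at h2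
    exact h2
  have hsqw : ∀ k, Integrable (fun ω => ‖w k ω - wstar‖^2) μ := by
    intro k
    refine ((hint5 k).const_mul cA⁻¹).mono'
      ((((hmeasw k).sub measurable_const).norm.pow_const 2).aestronglyMeasurable) ?_
    filter_upwards with ω
    rw [Real.norm_eq_abs, abs_of_nonneg (by positivity)]
    have h1 := hcoA (w k ω - wstar)
    have h2 := mul_le_mul_of_nonneg_left h1 (inv_nonneg.2 hcA.le)
    rw [← mul_assoc, inv_mul_cancel₀ hcA.ne', one_mul] at h2
    exact h2
  have hprod : ∀ k i, Integrable (fun ω => (w k ω - wstar) i * g k ω i) μ := by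
    intro k i
    refine ((hsqw k).add (hsqg k)).mono' ?_ ?_
    · exact (((EuclideanSpace.proj (𝕜 := ℝ) i).continuous.measurable.comp
        ((hmeasw k).sub measurable_const)).mul
        ((EuclideanSpace.proj (𝕜 := ℝ) i).continuous.measurable.comp
          (hmeasg k))).aestronglyMeasurable
    · filter_upwards with ω
      simp only [Pi.add_apply]
      have h1 := LSSGD.coord_abs_le_norm (w k ω - wstar) i
      have h2 := LSSGD.coord_abs_le_norm (g k ω) i
      rw [Real.norm_eq_abs, abs_mul]
      nlinarith [abs_nonneg ((w k ω - wstar) i), abs_nonneg (g k ω i),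
        norm_nonneg (w k ω - wstar), norm_nonneg (g k ω),
        sq_nonneg (‖w k ω - wstar‖ - ‖g k ω‖)]
  -- key inequality: f-gap at step k is at most c k
  have hkey : ∀ k, (∫ ω, f (w k ω) ∂μ) - f wstar ≤ c k := by
    intro k
    obtain ⟨hceq, hcint⟩ := LSSGD.key_cond μ (hle k)
      (G := g k) (V := fun ω => w k ω - wstar) (F := fun ω => gradf (w k ω))
      (hint3 k) ((hwm k).sub measurable_const) (hprod k) (hcond k)
    have hpt : ∀ ω, f (w k ω) - f wstar
        ≤ (inner ℝ (gradf (w k ω)) (w k ω - wstar) : ℝ) := by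
      intro ω
      have h1 := LSSGD.convex_grad_ineq hconv (hgrad (w k ω)) wstar
      have h2 : (inner ℝ (gradf (w k ω)) (wstar - w k ω) : ℝ)
          = -(inner ℝ (gradf (w k ω)) (w k ω - wstar) : ℝ) := by
        rw [← inner_neg_right, neg_sub]
      rw [h2] at h1
      linarith
    have hsubint : Integrable (fun ω => f (w k ω) - f wstar) μ :=
      (hint1 k).sub (integrable_const (f wstar))
    have hmono2 : ∫ ω, (f (w k ω) - f wstar) ∂μ
        ≤ ∫ ω, (inner ℝ (gradf (w k ω)) (w k ω - wstar) : ℝ) ∂μ :=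
      integral_mono hsubint hcint hpt
    rw [integral_sub (hint1 k) (integrable_const _), integral_const] at hmono2
    simp only [probReal_univ, measure_univ, ENNReal.toReal_one, one_smul, smul_eq_mul, one_mul] at hmono2
    calc (∫ ω, f (w k ω) ∂μ) - f wstar
        ≤ ∫ ω, (inner ℝ (gradf (w k ω)) (w k ω - wstar) : ℝ) ∂μ := hmono2
      _ = c k := hceq.symm
  -- the descent recurrence
  have hrecur : ∀ k, a (k+1) = a k - 2*η*c k + η^2 * b k := by
    intro k
    have heq : ∀ ω, (inner ℝ (w (k+1) ω - wstar)
        (Matrix.toEuclideanLin (MatAn m σ n) (w (k+1) ω - wstar)) : ℝ)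
        = (inner ℝ (w k ω - wstar)
            (Matrix.toEuclideanLin (MatAn m σ n) (w k ω - wstar)) : ℝ)
          - 2*η*(inner ℝ (g k ω) (w k ω - wstar) : ℝ)
          + η^2*(inner ℝ (g k ω)
              (Matrix.toEuclideanLin ((MatAn m σ n)⁻¹) (g k ω)) : ℝ) := by
      intro ω
      have h1 : w (k+1) ω - wstar
          = (w k ω - wstar) - η • Matrix.toEuclideanLin ((MatAn m σ n)⁻¹) (g k ω) := by
        rw [hrec k ω]; exact sub_right_comm _ _ _
      rw [h1]
      exact LSSGD.descent_identity hApd hinv hinv' η (w k ω - wstar) (g k ω)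
    calc a (k+1) = ∫ ω, ((inner ℝ (w k ω - wstar)
            (Matrix.toEuclideanLin (MatAn m σ n) (w k ω - wstar)) : ℝ)
          - 2*η*(inner ℝ (g k ω) (w k ω - wstar) : ℝ)
          + η^2*(inner ℝ (g k ω)
              (Matrix.toEuclideanLin ((MatAn m σ n)⁻¹) (g k ω)) : ℝ)) ∂μ :=
          integral_congr_ae (Filter.Eventually.of_forall heq)
      _ = a k - 2*η*c k + η^2 * b k := by
          have hI3 : Integrable
              (fun ω => 2*η*(inner ℝ (g k ω) (w k ω - wstar) : ℝ)) μ :=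
            (hint6 k).const_mul (2*η)
          have hI2 : Integrable (fun ω => η^2*(inner ℝ (g k ω)
              (Matrix.toEuclideanLin ((MatAn m σ n)⁻¹) (g k ω)) : ℝ)) μ :=
            (hint4 k).const_mul (η^2)
          have hI1 : Integrable (fun ω => (inner ℝ (w k ω - wstar)
              (Matrix.toEuclideanLin (MatAn m σ n) (w k ω - wstar)) : ℝ)
                - 2*η*(inner ℝ (g k ω) (w k ω - wstar) : ℝ)) μ :=
            (hint5 k).sub hI3
          rw [integral_add hI1 hI2, integral_sub (hint5 k) hI3,
            integral_const_mul, integral_const_mul]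
  -- telescoping
  have haK : 0 ≤ a K :=
    integral_nonneg (fun ω => LSSGD.psd_inner_nonneg hApd.posSemidef _)
  have hsumc : ∑ k ∈ Finset.range K, c k
      ≤ a 0 / (2*η) + (η/2) * ∑ k ∈ Finset.range K, b k := by
    have hck : ∀ k, c k = (a k - a (k+1))/(2*η) + (η/2) * b k := by
      intro k
      have h1 := hrecur k
      field_simp
      linarith
    rw [Finset.sum_congr rfl (fun k _ => hck k), Finset.sum_add_distrib,
      ← Finset.sum_div, Finset.sum_range_sub' a K, ← Finset.mul_sum]
    have h2 : (a 0 - a K)/(2*η) ≤ a 0/(2*η) := by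
      apply div_le_div_of_nonneg_right ?_ (by positivity)
      · linarith
    linarith
  -- Jensen
  have hKpos : (0:ℝ) < (K:ℝ) := by exact_mod_cast hK
  have hjensen : ∫ ω, f ((K:ℝ)⁻¹ • ∑ k ∈ Finset.range K, w k ω) ∂μ
      ≤ (K:ℝ)⁻¹ * ∑ k ∈ Finset.range K, ∫ ω, f (w k ω) ∂μ := by
    have hpt : ∀ ω, f ((K:ℝ)⁻¹ • ∑ k ∈ Finset.range K, w k ω)
        ≤ ∑ k ∈ Finset.range K, (K:ℝ)⁻¹ * f (w k ω) := by
      intro ω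
      have h1 := hconv.map_sum_le (t := Finset.range K) (w := fun _ => (K:ℝ)⁻¹)
        (p := fun k => w k ω) (fun i _ => by positivity)
        (by rw [Finset.sum_const, Finset.card_range, nsmul_eq_mul,
              mul_inv_cancel₀ (ne_of_gt hKpos)])
        (fun i _ => Set.mem_univ _)
      rw [← Finset.smul_sum] at h1
      simpa [smul_eq_mul] using h1
    have h2 := integral_mono hint2
      (integrable_finset_sum _ (fun k _ => (hint1 k).const_mul _)) hpt
    rw [integral_finset_sum _ (fun k _ => (hint1 k).const_mul _)] at h2
    calc ∫ ω, f ((K:ℝ)⁻¹ • ∑ k ∈ Finset.range K, w k ω) ∂μ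
        ≤ ∑ k ∈ Finset.range K, ∫ ω, (K:ℝ)⁻¹ * f (w k ω) ∂μ := h2
      _ = (K:ℝ)⁻¹ * ∑ k ∈ Finset.range K, ∫ ω, f (w k ω) ∂μ := by
          rw [Finset.mul_sum]
          exact Finset.sum_congr rfl fun k _ => integral_const_mul _ _
  -- combine everything
  have hfinal : ∑ k ∈ Finset.range K, ((∫ ω, f (w k ω) ∂μ) - f wstar)
      ≤ a 0/(2*η) + (η/2) * ∑ k ∈ Finset.range K, b k :=
    le_trans (Finset.sum_le_sum fun k _ => hkey k) hsumc
  rw [Finset.sum_sub_distrib, Finset.sum_const, Finset.card_range, nsmul_eq_mul] at hfinal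
  have hmain : (∫ ω, f ((K:ℝ)⁻¹ • ∑ k ∈ Finset.range K, w k ω) ∂μ) - f wstar
      ≤ 1/(2*η*(K:ℝ)) * a 0 + η/(2*(K:ℝ)) * ∑ k ∈ Finset.range K, b k := by
    have h3 : (∫ ω, f ((K:ℝ)⁻¹ • ∑ k ∈ Finset.range K, w k ω) ∂μ) - f wstar
        ≤ (K:ℝ)⁻¹ * ((∑ k ∈ Finset.range K, ∫ ω, f (w k ω) ∂μ) - (K:ℝ) * f wstar) := by
      rw [mul_sub, ← mul_assoc, inv_mul_cancel₀ (ne_of_gt hKpos), one_mul]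
      linarith
    have h4 := mul_le_mul_of_nonneg_left hfinal (le_of_lt (inv_pos.2 hKpos))
    calc (∫ ω, f ((K:ℝ)⁻¹ • ∑ k ∈ Finset.range K, w k ω) ∂μ) - f wstar
        ≤ (K:ℝ)⁻¹ * (a 0/(2*η) + (η/2) * ∑ k ∈ Finset.range K, b k) := le_trans h3 h4
      _ = 1/(2*η*(K:ℝ)) * a 0 + η/(2*(K:ℝ)) * ∑ k ∈ Finset.range K, b k := by
          field_simp
  exact hmain
end

section
/- Let f : ℝ^m → ℝ be differentiable with L-Lipschitz continuous gradient and bounded below. Let σ ≥ 0, n ≥ 1, and let step sizes satisfy 0 < η̃ ≤ η_k ≤ η̄ < 2/L for all k. Then the iterates w^{k+1} = w^k − η_k (A_σ^{(n)})^{-1} ∇f(w^k) satisfy ‖∇f(w^k)‖ → 0 as k → ∞. -/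
open Matrix

section Aux

local notation "⟪" x ", " y "⟫" => @inner ℝ _ _ x y

lemma my_descent {E : Type*} [NormedAddCommGroup E] [InnerProductSpace ℝ E] [CompleteSpace E]
    (f : E → ℝ) (g : E → E) (hg : ∀ x, HasGradientAt f (g x) x)
    (L : ℝ) (hlip : ∀ x y, ‖g x - g y‖ ≤ L * ‖x - y‖)
    (x d : E) : f (x + d) ≤ f x + ⟪g x, d⟫ + L / 2 * ‖d‖ ^ 2 := by
  have hgc : Continuous g := by
    refine (LipschitzWith.of_dist_le_mul (K := L.toNNReal) (f := g) ?_).continuous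
    intro a b
    rw [dist_eq_norm, dist_eq_norm]
    calc ‖g a - g b‖ ≤ L * ‖a - b‖ := hlip a b
    _ ≤ L.toNNReal * ‖a - b‖ := by
        gcongr; exact Real.le_coe_toNNReal L
  set c : ℝ → E := fun t => x + t • d with hc
  have hccont : Continuous c := by
    exact continuous_const.add (continuous_id.smul continuous_const)
  have hφ : ∀ t : ℝ, HasDerivAt (fun s => f (c s)) ⟪g (c t), d⟫ t := by
    intro t
    have h1 : HasDerivAt c d t := by
      simpa [hc] using ((hasDerivAt_id t).smul_const d).const_add x
    have h2 := (hg (c t)).hasFDerivAt.comp_hasDerivAt t h1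
    simp at h2
    exact h2
  have hcont : Continuous fun t : ℝ => ⟪g (c t), d⟫ :=
    ((hgc.comp hccont).inner continuous_const)
  have hint : IntervalIntegrable (fun t : ℝ => ⟪g (c t), d⟫) MeasureTheory.volume 0 1 :=
    hcont.intervalIntegrable 0 1
  have heq : ∫ t in (0:ℝ)..1, ⟪g (c t), d⟫ = f (c 1) - f (c 0) := by
    refine intervalIntegral.integral_eq_sub_of_hasDerivAt (fun t _ => hφ t) hint
  have hbound : ∫ t in (0:ℝ)..1, ⟪g (c t), d⟫
      ≤ ∫ t in (0:ℝ)..1, (⟪g x, d⟫ + L * t * ‖d‖ ^ 2) := by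
    refine intervalIntegral.integral_mono_on (by norm_num) hint ?_ ?_
    · apply Continuous.intervalIntegrable
      continuity
    · intro t ht
      have h1 : ⟪g (c t), d⟫ - ⟪g x, d⟫ = ⟪g (c t) - g x, d⟫ := by
        rw [inner_sub_left]
      have h2 : ⟪g (c t) - g x, d⟫ ≤ ‖g (c t) - g x‖ * ‖d‖ := real_inner_le_norm _ _
      have h3 : ‖g (c t) - g x‖ ≤ L * (t * ‖d‖) := by
        have := hlip (c t) x
        simpa [hc, norm_smul, abs_of_nonneg ht.1] using this
      nlinarith [norm_nonneg d, mul_le_mul_of_nonneg_right h3 (norm_nonneg d)]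
  have hval : ∫ t in (0:ℝ)..1, (⟪g x, d⟫ + L * t * ‖d‖ ^ 2) = ⟪g x, d⟫ + L / 2 * ‖d‖ ^ 2 := by
    rw [intervalIntegral.integral_add (intervalIntegrable_const)
      (by apply Continuous.intervalIntegrable; continuity)]
    simp only [intervalIntegral.integral_const]
    have : ∫ t in (0:ℝ)..1, L * t * ‖d‖ ^ 2 = L / 2 * ‖d‖ ^ 2 := by
      have : (fun t : ℝ => L * t * ‖d‖ ^ 2) = fun t : ℝ => (L * ‖d‖ ^ 2) * t := by
        funext t; ring
      rw [this, intervalIntegral.integral_const_mul, integral_id]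
      ring
    rw [this]; norm_num
  have hc0 : c 0 = x := by simp [hc]
  have hc1 : c 1 = x + d := by simp [hc]
  rw [hc0, hc1] at heq
  linarith [hbound.trans_eq hval, heq]

lemma matAn_eq (m : ℕ) [NeZero m] (σ : ℝ) (n : ℕ) :
    MatAn m σ n = 1 + σ • ((Dplus m)ᵀ * Dplus m) ^ n := by
  have hLap : Lap m = -((Dplus m)ᵀ * Dplus m) := by
    simp [Lap, Dminus, Matrix.neg_mul]
  rw [MatAn, hLap]
  rcases Nat.even_or_odd n with h | h
  · rw [h.neg_pow ((Dplus m)ᵀ * Dplus m), h.neg_one_pow, one_mul]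
  · rw [h.neg_pow ((Dplus m)ᵀ * Dplus m), h.neg_one_pow, smul_neg, neg_one_mul, neg_smul,
      neg_neg]

lemma quad_ge (m : ℕ) [NeZero m] (σ : ℝ) (hσ : 0 ≤ σ) (n : ℕ) (v : Fin m → ℝ) :
    v ⬝ᵥ v ≤ v ⬝ᵥ (MatAn m σ n *ᵥ v) := by
  have hpsd : (((Dplus m)ᵀ * Dplus m) ^ n).PosSemidef := by
    have h1 : ((Dplus m)ᵀ * Dplus m).PosSemidef := by
      have := Matrix.posSemidef_conjTranspose_mul_self (Dplus m)
      simpa [Matrix.conjTranspose_eq_transpose_of_trivial] using this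
    exact h1.pow n
  have h2 := hpsd.dotProduct_mulVec_nonneg v
  simp only [star_trivial] at h2
  rw [matAn_eq, Matrix.add_mulVec, Matrix.one_mulVec, Matrix.smul_mulVec,
    dotProduct_add, dotProduct_smul, smul_eq_mul]
  nlinarith

lemma matAn_isUnit_det (m : ℕ) [NeZero m] (σ : ℝ) (hσ : 0 ≤ σ) (n : ℕ) :
    IsUnit (MatAn m σ n).det := by
  rw [← Matrix.isUnit_iff_isUnit_det, ← Matrix.mulVec_injective_iff_isUnit]
  intro a b hab
  have h : MatAn m σ n *ᵥ (a - b) = 0 := by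
    rw [Matrix.mulVec_sub, hab, sub_self]
  have hle := quad_ge m σ hσ n (a - b)
  rw [h, dotProduct_zero] at hle
  have hab0 : a - b = 0 := by
    rw [← dotProduct_self_eq_zero (v := a - b)]
    have hnn : (0:ℝ) ≤ (a - b) ⬝ᵥ (a - b) := by
      simpa using dotProduct_star_self_nonneg (a - b)
    linarith
  exact sub_eq_zero.mp hab0

end Aux

set_option maxHeartbeats 1000000 in
/-- Convergence of LSGD: if `∇f` is `L`-Lipschitz, `f` is bounded below, and the step
sizes satisfy `0 < η̃ ≤ η_k ≤ η̄ < 2/L`, then the iterates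
`w^{k+1} = w^k - η_k (A_σ⁽ⁿ⁾)⁻¹ ∇f(w^k)` satisfy `‖∇f(w^k)‖ → 0`. -/
theorem stmt7 (m : ℕ) [NeZero m] (σ : ℝ) (hσ : 0 ≤ σ) (n : ℕ) (hn : 1 ≤ n)
    (f : EuclideanSpace ℝ (Fin m) → ℝ)
    (gradf : EuclideanSpace ℝ (Fin m) → EuclideanSpace ℝ (Fin m))
    (hgrad : ∀ x, HasGradientAt f (gradf x) x)
    (L : ℝ) (hL : 0 < L)
    (hlip : ∀ x y, ‖gradf x - gradf y‖ ≤ L * ‖x - y‖)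
    (hbdd : BddBelow (Set.range f))
    (η : ℕ → ℝ) (ηlo ηhi : ℝ) (hηlo : 0 < ηlo)
    (hηk : ∀ k, ηlo ≤ η k ∧ η k ≤ ηhi) (hηhi : ηhi < 2 / L)
    (w : ℕ → EuclideanSpace ℝ (Fin m))
    (hrec : ∀ k, w (k + 1)
        = w k - η k • Matrix.toEuclideanLin ((MatAn m σ n)⁻¹) (gradf (w k))) :
    Filter.Tendsto (fun k => ‖gradf (w k)‖) Filter.atTop (nhds 0) := by
  set A := MatAn m σ n with hA
  set T : EuclideanSpace ℝ (Fin m) →ₗ[ℝ] EuclideanSpace ℝ (Fin m) := Matrix.toEuclideanLin A with hT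
  set S : EuclideanSpace ℝ (Fin m) →ₗ[ℝ] EuclideanSpace ℝ (Fin m) := Matrix.toEuclideanLin A⁻¹ with hS
  have hAB : A * A⁻¹ = 1 := Matrix.mul_nonsing_inv A (matAn_isUnit_det m σ hσ n)
  have hTS : ∀ v : EuclideanSpace ℝ (Fin m), T (S v) = v := by
    intro v
    rw [hT, hS, Matrix.toEuclideanLin_apply, Matrix.toEuclideanLin_apply]
    simp [Matrix.mulVec_mulVec, hAB]
  have hquadE : ∀ v : EuclideanSpace ℝ (Fin m), ‖v‖ ^ 2 ≤ @inner ℝ _ _ (T v) v := by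
    intro v
    rw [← real_inner_self_eq_norm_sq]
    rw [PiLp.inner_apply, PiLp.inner_apply]
    have := quad_ge m σ hσ n (fun i => v i)
    simp only [RCLike.inner_apply, starRingEnd_apply, star_trivial]
    calc ∑ i, v i * v i = (fun i => v i) ⬝ᵥ (fun i => v i) := rfl
      _ ≤ (fun i => v i) ⬝ᵥ (A *ᵥ fun i => v i) := this
      _ = ∑ i, (T v) i * v i := by
          rw [dotProduct_comm]
          rfl
      _ = ∑ i, v i * (T v) i := Finset.sum_congr rfl fun i _ => mul_comm _ _
  -- operator norm bound
  set C : ℝ := ‖(LinearMap.toContinuousLinearMap T : EuclideanSpace ℝ (Fin m) →L[ℝ] EuclideanSpace ℝ (Fin m))‖ with hCdef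
  have hC : ∀ v : EuclideanSpace ℝ (Fin m), ‖T v‖ ≤ C * ‖v‖ := fun v =>
    (LinearMap.toContinuousLinearMap T).le_opNorm v
  -- per-step decrease
  set x : ℕ → EuclideanSpace ℝ (Fin m) := fun k => S (gradf (w k)) with hx
  set c : ℝ := ηlo * (1 - L * ηhi / 2) with hcdef
  have hLηhi : L * ηhi < 2 := by
    have := (lt_div_iff₀ hL).mp hηhi
    linarith
  have hc : 0 < c := by
    rw [hcdef]
    apply mul_pos hηlo
    nlinarith
  have hstep : ∀ k, f (w (k + 1)) + c * ‖x k‖ ^ 2 ≤ f (w k) := by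
    intro k
    have hw : w (k + 1) = w k + (-(η k)) • x k := by
      rw [hrec k, sub_eq_add_neg, ← neg_smul]
    have hd := my_descent f gradf hgrad L hlip (w k) ((-(η k)) • x k)
    rw [← hw] at hd
    have hinner : @inner ℝ _ _ (gradf (w k)) ((-(η k)) • x k)
        = -(η k) * @inner ℝ _ _ (gradf (w k)) (x k) := real_inner_smul_right _ _ _
    have hnorm : ‖(-(η k)) • x k‖ ^ 2 = η k ^ 2 * ‖x k‖ ^ 2 := by
      rw [norm_smul]
      simp [mul_pow, sq_abs]
    rw [hinner, hnorm] at hd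
    have hq : ‖x k‖ ^ 2 ≤ @inner ℝ _ _ (gradf (w k)) (x k) := by
      have := hquadE (x k)
      rwa [hx, hTS (gradf (w k))] at this
    obtain ⟨h1, h2⟩ := hηk k
    have hηpos : 0 < η k := lt_of_lt_of_le hηlo h1
    have hx2 : (0:ℝ) ≤ ‖x k‖ ^ 2 := sq_nonneg _
    have e1 : η k * ‖x k‖ ^ 2 ≤ η k * @inner ℝ _ _ (gradf (w k)) (x k) :=
      mul_le_mul_of_nonneg_left hq hηpos.le
    have e2 : c * ‖x k‖ ^ 2 ≤ (η k - L * η k ^ 2 / 2) * ‖x k‖ ^ 2 := by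
      apply mul_le_mul_of_nonneg_right _ hx2
      nlinarith [mul_nonneg (sub_nonneg.mpr h1) (by nlinarith : (0:ℝ) ≤ 1 - L * ηhi / 2),
        mul_nonneg (mul_nonneg hηpos.le hL.le) (sub_nonneg.mpr h2)]
    have e3 : (η k - L * η k ^ 2 / 2) * ‖x k‖ ^ 2
        = η k * ‖x k‖ ^ 2 - L / 2 * (η k ^ 2 * ‖x k‖ ^ 2) := by ring
    linarith
  -- convergence of function values
  set a : ℕ → ℝ := fun k => f (w k) with ha
  have hmono : Antitone a := by
    apply antitone_nat_of_succ_le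
    intro k
    have := hstep k
    nlinarith [sq_nonneg ‖x k‖, mul_nonneg hc.le (sq_nonneg ‖x k‖)]
  obtain ⟨b, hb⟩ := hbdd
  have hblb : ∀ k, b ≤ a k := fun k => hb ⟨w k, rfl⟩
  have hconv : Filter.Tendsto a Filter.atTop (nhds (⨅ k, a k)) :=
    tendsto_atTop_ciInf hmono ⟨b, Set.forall_mem_range.mpr hblb⟩
  have hconv' : Filter.Tendsto (fun k => a (k + 1)) Filter.atTop (nhds (⨅ k, a k)) :=
    hconv.comp (Filter.tendsto_add_atTop_nat 1)
  have hdiff : Filter.Tendsto (fun k => a k - a (k + 1)) Filter.atTop (nhds 0) := by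
    simpa using hconv.sub hconv'
  have hx2to0 : Filter.Tendsto (fun k => ‖x k‖ ^ 2) Filter.atTop (nhds 0) := by
    apply squeeze_zero (fun k => sq_nonneg _) (g := fun k => (1 / c) * (a k - a (k + 1)))
    · intro k
      have := hstep k
      rw [div_mul_eq_mul_div, le_div_iff₀ hc]
      nlinarith
    · simpa using hdiff.const_mul (1 / c)
  have hxto0 : Filter.Tendsto (fun k => ‖x k‖) Filter.atTop (nhds 0) := by
    have h := (Real.continuous_sqrt.tendsto 0).comp hx2to0
    have heq2 : (fun k => ‖x k‖) = fun k => Real.sqrt (‖x k‖ ^ 2) := by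
      funext k; rw [Real.sqrt_sq (norm_nonneg _)]
    rw [heq2]
    simpa [Function.comp_def] using h
  apply squeeze_zero (fun k => norm_nonneg _) (g := fun k => C * ‖x k‖)
  · intro k
    have : gradf (w k) = T (x k) := (hTS (gradf (w k))).symm
    rw [this]
    exact hC (x k)
  · simpa using hxto0.const_mul C
end
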